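/- The power region P_SIR is log-convex: if p⁽¹⁾, p⁽²⁾ ∈ P_SIR have all components strictly positive and 0 ≤ α ≤ 1, then the vector p⁽ᵅ⁾ with components p_i⁽ᵅ⁾ = (p_i⁽¹⁾)^α (p_i⁽²⁾)^{1−α} also belongs to P_SIR. -/

import Mathlib

open Matrix BigOperators

/-- Signal-to-interference ratio of user `i`. -/
noncomputable def SIR {K : ℕ} (A : Matrix (Fin K) (Fin K) ℝ) (C : Fin K → ℝ)
    (σ2 : ℝ) (p : Fin K → ℝ) (i : Fin K) : ℝ :=
  A i i * p i / ((∑ j ∈ Finset.univ.erase i, A i j * p j) + C i * σ2)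

/-- The power region. -/
noncomputable def PSIR {K : ℕ} (A : Matrix (Fin K) (Fin K) ℝ) (C : Fin K → ℝ)
    (σ2 : ℝ) (γ : Fin K → ℝ) : Set (Fin K → ℝ) :=
  {p | (∀ i, 0 ≤ p i) ∧ ∀ i, γ i ≤ SIR A C σ2 p i}

/-- Two-function Hölder inequality in geometric-mean form. -/
lemma holder_geom {ι : Type*} (s : Finset ι) (a b : ι → ℝ)
    (ha : ∀ j ∈ s, 0 ≤ a j) (hb : ∀ j ∈ s, 0 ≤ b j) {α : ℝ} (h0 : 0 < α) (h1 : α < 1) :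
    ∑ j ∈ s, a j ^ α * b j ^ (1 - α) ≤ (∑ j ∈ s, a j) ^ α * (∑ j ∈ s, b j) ^ (1 - α) := by
  have h1' : 0 < 1 - α := by linarith
  have hpq : Real.HolderConjugate (1 / α) (1 / (1 - α)) := by
    constructor
    · rw [one_div, one_div, inv_inv, inv_inv, inv_one]; ring
    · exact one_div_pos.mpr h0
    · exact one_div_pos.mpr h1'
  have H := Real.inner_le_Lp_mul_Lq_of_nonneg s hpq
    (f := fun j => a j ^ α) (g := fun j => b j ^ (1 - α))
    (fun j _ => Real.rpow_nonneg (ha j ‹_›) _)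
    (fun j _ => Real.rpow_nonneg (hb j ‹_›) _)
  have e1 : ∀ j ∈ s, (a j ^ α) ^ (1 / α) = a j := by
    intro j hj
    rw [← Real.rpow_mul (ha j hj), mul_one_div, div_self h0.ne', Real.rpow_one]
  have e2 : ∀ j ∈ s, (b j ^ (1 - α)) ^ (1 / (1 - α)) = b j := by
    intro j hj
    rw [← Real.rpow_mul (hb j hj), mul_one_div, div_self h1'.ne', Real.rpow_one]
  rw [Finset.sum_congr rfl e1, Finset.sum_congr rfl e2] at H
  simpa [one_div, inv_inv] using H

/-- The power region is log-convex: the componentwise geometric interpolation of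
two strictly positive points of `P_SIR` is again in `P_SIR`. -/
theorem power_region_log_convex {K : ℕ} (hK : 1 ≤ K)
    (A : Matrix (Fin K) (Fin K) ℝ) (C : Fin K → ℝ) (σ2 : ℝ) (γ : Fin K → ℝ)
    (hA : ∀ i j, 0 ≤ A i j) (hAd : ∀ i, 0 < A i i)
    (hC : ∀ i, 0 < C i) (hσ : 0 < σ2) (hγ : ∀ i, 0 < γ i)
    (p₁ p₂ : Fin K → ℝ) (hp₁ : p₁ ∈ PSIR A C σ2 γ) (hp₂ : p₂ ∈ PSIR A C σ2 γ)
    (hp₁pos : ∀ i, 0 < p₁ i) (hp₂pos : ∀ i, 0 < p₂ i)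
    (α : ℝ) (hα0 : 0 ≤ α) (hα1 : α ≤ 1) :
    (fun i => p₁ i ^ α * p₂ i ^ (1 - α)) ∈ PSIR A C σ2 γ := by
  -- dispose of degenerate endpoints
  rcases eq_or_lt_of_le hα0 with rfl | hα0'
  · simpa [Real.rpow_one, (hp₁pos _).le] using hp₂
  rcases eq_or_lt_of_le hα1 with rfl | hα1'
  · simpa [Real.rpow_one, (hp₂pos _).le] using hp₁
  obtain ⟨hp₁nn, hp₁sir⟩ := hp₁
  obtain ⟨hp₂nn, hp₂sir⟩ := hp₂
  -- denominators
  set D : (Fin K → ℝ) → Fin K → ℝ :=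
    fun p i => (∑ j ∈ Finset.univ.erase i, A i j * p j) + C i * σ2 with hD
  have hDpos : ∀ (p : Fin K → ℝ), (∀ j, 0 ≤ p j) → ∀ i, 0 < D p i := by
    intro p hp i
    have : 0 ≤ ∑ j ∈ Finset.univ.erase i, A i j * p j :=
      Finset.sum_nonneg fun j _ => mul_nonneg (hA i j) (hp j)
    have := mul_pos (hC i) hσ
    simp only [hD]; linarith
  have hpαnn : ∀ i, 0 ≤ p₁ i ^ α * p₂ i ^ (1 - α) := fun i =>
    mul_nonneg (Real.rpow_nonneg (hp₁pos i).le _) (Real.rpow_nonneg (hp₂pos i).le _)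
  refine ⟨hpαnn, fun i => ?_⟩
  -- key: denominator of interpolation is ≤ geometric mean of denominators
  have hkey : D (fun j => p₁ j ^ α * p₂ j ^ (1 - α)) i ≤ D p₁ i ^ α * D p₂ i ^ (1 - α) := by
    -- include noise term via a function on univ
    set a : Fin K → ℝ := fun j => if j = i then C i * σ2 else A i j * p₁ j with hax
    set b : Fin K → ℝ := fun j => if j = i then C i * σ2 else A i j * p₂ j with hbx
    have hanon : ∀ j ∈ (Finset.univ : Finset (Fin K)), 0 ≤ a j := by
      intro j _; simp only [hax]
      split <;> [exact (mul_pos (hC i) hσ).le; exact mul_nonneg (hA i j) (hp₁nn j)]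
    have hbnon : ∀ j ∈ (Finset.univ : Finset (Fin K)), 0 ≤ b j := by
      intro j _; simp only [hbx]
      split <;> [exact (mul_pos (hC i) hσ).le; exact mul_nonneg (hA i j) (hp₂nn j)]
    have Hsum := holder_geom Finset.univ a b hanon hbnon hα0' hα1'
    have hsa : ∑ j, a j = D p₁ i := by
      rw [hD, ← Finset.add_sum_erase _ a (Finset.mem_univ i)]
      simp only [hax, if_pos rfl]
      rw [add_comm]
      congr 1
      refine Finset.sum_congr rfl fun j hj => ?_
      rw [if_neg (Finset.ne_of_mem_erase hj)]
    have hsb : ∑ j, b j = D p₂ i := by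
      rw [hD, ← Finset.add_sum_erase _ b (Finset.mem_univ i)]
      simp only [hbx, if_pos rfl]
      rw [add_comm]
      congr 1
      refine Finset.sum_congr rfl fun j hj => ?_
      rw [if_neg (Finset.ne_of_mem_erase hj)]
    have hsab : ∑ j, a j ^ α * b j ^ (1 - α) = D (fun j => p₁ j ^ α * p₂ j ^ (1 - α)) i := by
      rw [hD, ← Finset.add_sum_erase _ (fun j => a j ^ α * b j ^ (1 - α)) (Finset.mem_univ i)]
      simp only [hax, hbx, if_pos rfl]
      rw [add_comm]
      congr 1
      · refine Finset.sum_congr rfl fun j hj => ?_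
        rw [if_neg (Finset.ne_of_mem_erase hj), if_neg (Finset.ne_of_mem_erase hj),
          Real.mul_rpow (hA i j) (hp₁pos j).le, Real.mul_rpow (hA i j) (hp₂pos j).le]
        rw [show A i j ^ α * p₁ j ^ α * (A i j ^ (1 - α) * p₂ j ^ (1 - α))
            = (A i j ^ α * A i j ^ (1 - α)) * (p₁ j ^ α * p₂ j ^ (1 - α)) by ring,
          ← Real.rpow_add' (hA i j) (by norm_num)]
        norm_num
      · rw [← Real.rpow_add' (mul_pos (hC i) hσ).le (by norm_num)]
        norm_num
    rw [← hsa, ← hsb, ← hsab]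
    exact Hsum
  -- turn SIR conditions into linear inequalities
  have h1 : γ i * D p₁ i ≤ A i i * p₁ i := by
    have := hp₁sir i
    rw [SIR, le_div_iff₀ (hDpos p₁ hp₁nn i)] at this
    exact this
  have h2 : γ i * D p₂ i ≤ A i i * p₂ i := by
    have := hp₂sir i
    rw [SIR, le_div_iff₀ (hDpos p₂ hp₂nn i)] at this
    exact this
  rw [SIR, le_div_iff₀ (hDpos _ hpαnn i)]
  calc γ i * D (fun j => p₁ j ^ α * p₂ j ^ (1 - α)) i
      ≤ γ i * (D p₁ i ^ α * D p₂ i ^ (1 - α)) :=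
        mul_le_mul_of_nonneg_left hkey (hγ i).le
    _ = (γ i * D p₁ i) ^ α * (γ i * D p₂ i) ^ (1 - α) := by
        rw [Real.mul_rpow (hγ i).le (hDpos p₁ hp₁nn i).le,
          Real.mul_rpow (hγ i).le (hDpos p₂ hp₂nn i).le,
          show γ i ^ α * D p₁ i ^ α * (γ i ^ (1 - α) * D p₂ i ^ (1 - α))
            = (γ i ^ α * γ i ^ (1 - α)) * (D p₁ i ^ α * D p₂ i ^ (1 - α)) by ring,
          ← Real.rpow_add' (hγ i).le (by norm_num)]
        norm_num
    _ ≤ (A i i * p₁ i) ^ α * (A i i * p₂ i) ^ (1 - α) := by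
        apply mul_le_mul
        · exact Real.rpow_le_rpow (mul_nonneg (hγ i).le (hDpos p₁ hp₁nn i).le) h1 hα0
        · exact Real.rpow_le_rpow (mul_nonneg (hγ i).le (hDpos p₂ hp₂nn i).le) h2 (by linarith)
        · exact Real.rpow_nonneg (mul_nonneg (hγ i).le (hDpos p₂ hp₂nn i).le) _
        · exact Real.rpow_nonneg (mul_nonneg (hAd i).le (hp₁pos i).le) _
    _ = A i i * (p₁ i ^ α * p₂ i ^ (1 - α)) := by
        rw [Real.mul_rpow (hAd i).le (hp₁pos i).le, Real.mul_rpow (hAd i).le (hp₂pos i).le,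
          show A i i ^ α * p₁ i ^ α * (A i i ^ (1 - α) * p₂ i ^ (1 - α))
            = (A i i ^ α * A i i ^ (1 - α)) * (p₁ i ^ α * p₂ i ^ (1 - α)) by ring,
          ← Real.rpow_add' (hAd i).le (by norm_num)]
        norm_num
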